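/- (Invariance under polynomial preimages) Let L ⊂ ℂ be a compact set containing at least n+1 points, w_L : L → [0,∞) a bounded upper semicontinuous function nonzero at at least n+1 points of L, and p(z) = a_m z^m + ⋯ + a₀ a polynomial of degree m ≥ 1 with a_m ≠ 0. Define K = p⁻¹(L) and w_K : K → [0,∞) by w_K(z) = w_L(p(z)). Then the weighted Chebyshev polynomial of degree nm on K with respect to w_K is given by T_{nm,w_K}^{(K)}(z) = T_{n,w_L}^{(L)}(p(z)) / a_m^n, where T_{n,w_L}^{(L)} is the weighted Chebyshev polynomial of degree n on L with respect to w_L. -/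

import Mathlib

set_option linter.unusedSectionVars false
set_option linter.unusedVariables false

open Polynomial Metric Set Pointwise

noncomputable def wnorm (E : Set ℂ) (v : ℂ → ℝ) (P : Polynomial ℂ) : ℝ :=
  sSup ((fun z => v z * ‖P.eval z‖) '' E)


lemma exists_fn (s : Multiset ℂ) : ∃ f : Fin (Multiset.card s) → ℂ,
    Finset.univ.val.map f = s := by
  induction s using Quotient.inductionOn with
  | h l =>
    refine ⟨fun i => l.get (Fin.cast rfl i), ?_⟩
    rw [Fin.univ_val_map]
    show ((List.ofFn fun i => l.get (Fin.cast rfl i) : List ℂ) : Multiset ℂ) = _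
    rw [show (List.ofFn fun i => l.get (Fin.cast rfl i)) = l from List.ofFn_get l]
    rfl

lemma eval_psum (N : ℕ) (f : Fin N → ℂ) (k : ℕ) :
    MvPolynomial.eval f (MvPolynomial.psum (Fin N) ℂ k) = ((Finset.univ.val.map f).map (· ^ k)).sum := by
  simp only [MvPolynomial.psum, map_sum, map_pow, MvPolynomial.eval_X, Multiset.map_map,
    Function.comp]
  rfl

lemma eval_esymm (N : ℕ) (f : Fin N → ℂ) (k : ℕ) :
    MvPolynomial.eval f (MvPolynomial.esymm (Fin N) ℂ k) = (Finset.univ.val.map f).esymm k := by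
  rw [Finset.esymm_map_val, MvPolynomial.esymm, map_sum]
  simp [MvPolynomial.eval_prod]



lemma multiset_newton (s : Multiset ℂ) (j : ℕ) (hj : 0 < j) :
    (s.map (· ^ j)).sum = (-1 : ℂ) ^ (j + 1) * j * s.esymm j -
      ∑ a ∈ Finset.HasAntidiagonal.antidiagonal j with a.1 ∈ Set.Ioo 0 j,
        (-1 : ℂ) ^ a.1 * s.esymm a.1 * (s.map (· ^ a.2)).sum := by
  obtain ⟨f, hf⟩ := exists_fn s
  have := congrArg (MvPolynomial.eval f)
    (MvPolynomial.psum_eq_mul_esymm_sub_sum (Fin (Multiset.card s)) ℂ j hj)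
  simp only [map_sub, map_mul, map_sum, map_pow, map_neg, map_one, map_natCast,
    eval_psum, eval_esymm, hf] at this
  exact this

lemma psum_congr (N : ℕ) : ∀ j, ∀ s t : Multiset ℂ, Multiset.card s = N → Multiset.card t = N →
    (∀ k, 1 ≤ k → k ≤ j → s.esymm k = t.esymm k) →
    (s.map (· ^ j)).sum = (t.map (· ^ j)).sum := by
  intro j
  induction j using Nat.strong_induction_on with
  | _ j ih =>
    intro s t hs ht he
    rcases Nat.eq_zero_or_pos j with rfl | hj
    · simp [hs, ht]
    · rw [multiset_newton s j hj, multiset_newton t j hj, he j hj le_rfl]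
      congr 1
      refine Finset.sum_congr rfl fun a ha => ?_
      simp only [Finset.mem_filter, Finset.HasAntidiagonal.mem_antidiagonal, Set.mem_Ioo] at ha
      obtain ⟨hsum, h0, hlt⟩ := ha
      rw [he a.1 h0 (le_of_lt hlt), ih a.2 (by omega) s t hs ht
        (fun k hk1 hk2 => he k hk1 (by omega))]



section
variable {p : Polynomial ℂ} {m : ℕ} (hm : 1 ≤ m) (hpdeg : p.natDegree = m)
include hm hpdeg

lemma fiber_natDegree (w : ℂ) : (p - C w).natDegree = m := by
  rw [natDegree_sub_C, hpdeg]

lemma fiber_card (w : ℂ) : Multiset.card (p - C w).roots = m := by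
  have hsp : Splits (p - C w) := IsAlgClosed.splits _
  rw [(splits_iff_card_roots.mp hsp), fiber_natDegree hm hpdeg]

lemma fiber_ne_zero (w : ℂ) : p - C w ≠ 0 := by
  intro h
  have := fiber_natDegree (p := p) (m := m) hm hpdeg w
  rw [h, natDegree_zero] at this
  omega

lemma fiber_leadingCoeff (w : ℂ) : (p - C w).leadingCoeff = p.leadingCoeff := by
  have h1 : (p - C w).natDegree = p.natDegree := natDegree_sub_C
  rw [leadingCoeff, leadingCoeff, h1, coeff_sub, coeff_C,
    if_neg (by rw [hpdeg]; omega), sub_zero]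

lemma fiber_esymm (w : ℂ) (i : ℕ) (h1 : 1 ≤ i) (h2 : i ≤ m - 1) :
    (p - C w).roots.esymm i = (p.leadingCoeff)⁻¹ * (-1 : ℂ) ^ i * p.coeff (m - i) := by
  have hsp : Splits (p - C w) := IsAlgClosed.splits _
  have hlc : p.leadingCoeff ≠ 0 := by
    rw [Ne, leadingCoeff_eq_zero]
    intro h
    rw [h, natDegree_zero] at hpdeg
    omega
  have hk : m - i ≤ (p - C w).natDegree := by rw [fiber_natDegree hm hpdeg]; omega
  have := Polynomial.coeff_eq_esymm_roots_of_splits hsp hk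
  rw [fiber_natDegree hm hpdeg, fiber_leadingCoeff hm hpdeg w] at this
  have hmi : m - (m - i) = i := by omega
  rw [hmi] at this
  have hcoeff : (p - C w).coeff (m - i) = p.coeff (m - i) := by
    rw [coeff_sub, coeff_C, if_neg (by omega), sub_zero]
  rw [hcoeff] at this
  rw [this]
  field_simp
  rw [← pow_mul, pow_mul', neg_one_sq, one_pow, mul_one]

lemma fiber_psum_const (w₁ w₂ : ℂ) (j : ℕ) (hj : j < m) :
    ((p - C w₁).roots.map (· ^ j)).sum = ((p - C w₂).roots.map (· ^ j)).sum := by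
  refine psum_congr m j _ _ (fiber_card hm hpdeg w₁) (fiber_card hm hpdeg w₂) fun k hk1 hk2 => ?_
  rw [fiber_esymm hm hpdeg w₁ k hk1 (by omega), fiber_esymm hm hpdeg w₂ k hk1 (by omega)]

lemma fiber_small_sum (q : Polynomial ℂ) (hq : q.natDegree < m) (w₁ w₂ : ℂ) :
    ((p - C w₁).roots.map fun z => q.eval z).sum
      = ((p - C w₂).roots.map fun z => q.eval z).sum := by
  have hev : ∀ z : ℂ, q.eval z = ∑ i ∈ Finset.range m, q.coeff i * z ^ i := fun z =>
    eval_eq_sum_range' hq z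
  have key : ∀ w : ℂ, ((p - C w).roots.map fun z => q.eval z).sum
      = ∑ i ∈ Finset.range m, q.coeff i * ((p - C w).roots.map (· ^ i)).sum := by
    intro w
    rw [show ((p - C w).roots.map fun z => q.eval z)
      = ((p - C w).roots.map fun z => ∑ i ∈ Finset.range m, q.coeff i * z ^ i) from
      Multiset.map_congr rfl fun z _ => hev z]
    induction (p - C w).roots using Multiset.induction with
    | empty => simp
    | cons a s ihs => simp [ihs, Finset.sum_add_distrib, mul_add]
  rw [key w₁, key w₂]
  exact Finset.sum_congr rfl fun i hi =>
    by rw [fiber_psum_const hm hpdeg w₁ w₂ i (Finset.mem_range.mp hi)]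



lemma hp_ne : p ≠ 0 := fun h => by rw [h, natDegree_zero] at hpdeg; omega

lemma hlc_ne : p.leadingCoeff ≠ 0 := leadingCoeff_ne_zero.mpr (hp_ne hm hpdeg)

lemma fiber_avg : ∀ n : ℕ, ∀ Q : Polynomial ℂ, Q.Monic → Q.natDegree = n * m →
    ∃ P : Polynomial ℂ, P.natDegree = n ∧ P.leadingCoeff = (m : ℂ) * (p.leadingCoeff ^ n)⁻¹ ∧
      ∀ w : ℂ, ((p - C w).roots.map fun z => Q.eval z).sum = P.eval w := by
  intro n
  induction n with
  | zero =>
    intro Q hQm hQd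
    have hQ1 : Q = 1 := hQm.natDegree_eq_zero.mp (by simpa using hQd)
    refine ⟨C (m : ℂ), natDegree_C _, by rw [leadingCoeff_C]; simp, fun w => ?_⟩
    simp [hQ1, fiber_card hm hpdeg w]
  | succ n ih =>
    intro Q hQm hQd
    set a := p.leadingCoeff with ha
    have ha0 : a ≠ 0 := hlc_ne hm hpdeg
    set pm : Polynomial ℂ := p * C a⁻¹ with hpm
    have hpmm : pm.Monic := monic_mul_leadingCoeff_inv (hp_ne hm hpdeg)
    have hpmd : pm.natDegree = m := by
      rw [hpm, natDegree_mul (hp_ne hm hpdeg) (by simp [ha0]), natDegree_C, hpdeg, add_zero]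
    set D : Polynomial ℂ := Q /ₘ pm with hD
    set r : Polynomial ℂ := Q %ₘ pm with hr
    have hQeq : r + pm * D = Q := modByMonic_add_div Q pm
    have hQ0 : Q ≠ 0 := hQm.ne_zero
    have hdegle : pm.degree ≤ Q.degree := by
      rw [degree_eq_natDegree hpmm.ne_zero, degree_eq_natDegree hQ0]
      exact_mod_cast (by rw [hpmd, hQd]; nlinarith : pm.natDegree ≤ Q.natDegree)
    have hDd : D.natDegree = n * m := by
      rw [hD, natDegree_divByMonic Q hpmm, hQd, hpmd]; ring_nf; omega
    have hDm : D.Monic := by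
      rw [Monic.def, hD, leadingCoeff_divByMonic_of_monic hpmm hdegle]
      exact hQm
    have hrd : r.natDegree < m := by
      rcases eq_or_ne r 0 with h0 | h0
      · rw [h0, natDegree_zero]; omega
      · have := degree_modByMonic_lt Q hpmm
        rw [← hr, degree_eq_natDegree h0, degree_eq_natDegree hpmm.ne_zero, hpmd] at this
        exact_mod_cast this
    obtain ⟨PD, hPDd, hPDl, hPDe⟩ := ih D hDm hDd
    have hm0 : (m : ℂ) ≠ 0 := Nat.cast_ne_zero.mpr (by omega)
    have hPD0 : PD ≠ 0 := fun h => by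
      rw [h, leadingCoeff_zero] at hPDl
      exact (mul_ne_zero hm0 (inv_ne_zero (pow_ne_zero _ ha0))) hPDl.symm
    set c : ℂ := ((p - C (0:ℂ)).roots.map fun z => r.eval z).sum with hc
    have hA0 : C a⁻¹ * (X * PD) ≠ 0 := by
      apply mul_ne_zero (by simp [ha0]) (mul_ne_zero X_ne_zero hPD0)
    have hAd : (C a⁻¹ * (X * PD)).natDegree = n + 1 := by
      rw [natDegree_mul (by simp [ha0]) (mul_ne_zero X_ne_zero hPD0), natDegree_C,
        natDegree_mul X_ne_zero hPD0, natDegree_X, hPDd]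
      omega
    have hAl : (C a⁻¹ * (X * PD)).leadingCoeff = (m : ℂ) * (a ^ (n + 1))⁻¹ := by
      rw [leadingCoeff_mul, leadingCoeff_mul, leadingCoeff_C, leadingCoeff_X, hPDl,
        pow_succ, mul_inv]
      ring
    have hPd : (C a⁻¹ * (X * PD) + C c).natDegree = n + 1 := by
      rw [natDegree_add_C, hAd]
    refine ⟨C a⁻¹ * (X * PD) + C c, hPd, ?_, ?_⟩
    · rw [leadingCoeff, hPd, coeff_add, coeff_C, if_neg (by omega), add_zero,
        ← hAd, ← leadingCoeff, hAl, hAd]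
    · intro w
      have hroot : ∀ z ∈ (p - C w).roots, p.eval z = w := by
        intro z hz
        have := isRoot_of_mem_roots hz
        simpa [sub_eq_zero] using this
      have hmapeq : ((p - C w).roots.map fun z => Q.eval z)
          = ((p - C w).roots.map fun z => a⁻¹ * w * D.eval z + r.eval z) := by
        refine Multiset.map_congr rfl fun z hz => ?_
        rw [← hQeq]
        simp only [eval_add, eval_mul, hpm, eval_C, hroot z hz]
        ring
      rw [hmapeq, Multiset.sum_map_add, Multiset.sum_map_mul_left,
        fiber_small_sum hm hpdeg r hrd w 0, ← hc, hPDe w]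
      simp only [eval_add, eval_mul, eval_C, eval_X]
      ring

end




lemma wnorm_bddAbove (E : Set ℂ) (hE : IsCompact E) (v : ℂ → ℝ) (hvb : BddAbove (v '' E))
    (hv0 : ∀ z ∈ E, 0 ≤ v z) (Q : Polynomial ℂ) :
    BddAbove ((fun z => v z * ‖Q.eval z‖) '' E) := by
  obtain ⟨Cv, hCv⟩ := hvb
  have hQc : Continuous fun z : ℂ => ‖Q.eval z‖ :=
    continuous_norm.comp Q.continuous
  obtain ⟨CQ, hCQ⟩ := (hE.image hQc).bddAbove
  refine ⟨max Cv 0 * max CQ 0, fun y hy => ?_⟩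
  obtain ⟨z, hz, rfl⟩ := hy
  have h1 : v z ≤ max Cv 0 := le_trans (hCv (mem_image_of_mem v hz)) (le_max_left _ _)
  have h2 : ‖Q.eval z‖ ≤ max CQ 0 :=
    le_trans (hCQ (mem_image_of_mem _ hz)) (le_max_left _ _)
  exact mul_le_mul h1 h2 (norm_nonneg _) (le_max_right _ _)

/-- Invariance of weighted Chebyshev polynomials under polynomial preimages:
if `T` is the weighted Chebyshev polynomial of degree `n` on `L` w.r.t. `w_L` and
`K = p⁻¹(L)`, `w_K = w_L ∘ p`, then `T(p(z))/a_m^n` is the weighted Chebyshev polynomial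
of degree `nm` on `K` w.r.t. `w_K`. -/
theorem stmt14 (L : Set ℂ) (hL : IsCompact L) (n : ℕ)
    (hLpts : ∃ S : Finset ℂ, ↑S ⊆ L ∧ n + 1 ≤ S.card)
    (wL : ℂ → ℝ) (hw0 : ∀ z ∈ L, 0 ≤ wL z) (hwb : BddAbove (wL '' L))
    (husc : UpperSemicontinuousOn wL L)
    (hsupp : ∃ S : Finset ℂ, ↑S ⊆ L ∧ n + 1 ≤ S.card ∧ ∀ z ∈ S, wL z ≠ 0)
    (p : Polynomial ℂ) (m : ℕ) (hm : 1 ≤ m) (hpdeg : p.natDegree = m)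
    (T : Polynomial ℂ) (hTmonic : T.Monic) (hTdeg : T.natDegree = n)
    (hTmin : ∀ P : Polynomial ℂ, P.Monic → P.natDegree = n → wnorm L wL T ≤ wnorm L wL P)
    (K : Set ℂ) (hK : K = (fun z => p.eval z) ⁻¹' L)
    (wK : ℂ → ℝ) (hwK : ∀ z, wK z = wL (p.eval z))
    (R : Polynomial ℂ) (hR : R = Polynomial.C ((p.leadingCoeff ^ n)⁻¹) * (T.comp p)) :
    R.Monic ∧ R.natDegree = n * m ∧
      ∀ Q : Polynomial ℂ, Q.Monic → Q.natDegree = n * m → wnorm K wK R ≤ wnorm K wK Q := by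
  have hp0 : p ≠ 0 := fun h => by rw [h, natDegree_zero] at hpdeg; omega
  set a : ℂ := p.leadingCoeff with ha
  have ha0 : a ≠ 0 := leadingCoeff_ne_zero.mpr hp0
  have hpdeg0 : p.natDegree ≠ 0 := by omega
  -- Part 1 : Monic and degree
  have hcomp0 : (T.comp p).leadingCoeff = a ^ n := by
    rw [leadingCoeff_comp hpdeg0, hTmonic.leadingCoeff, hTdeg, one_mul]
  have hcompne : T.comp p ≠ 0 := fun h => by
    rw [h, leadingCoeff_zero] at hcomp0
    exact pow_ne_zero n ha0 hcomp0.symm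
  have hRdeg : R.natDegree = n * m := by
    rw [hR, natDegree_mul (by simp [ha0]) hcompne, natDegree_C, natDegree_comp, hTdeg, hpdeg]
    omega
  have hRm : R.Monic := by
    rw [Monic.def, hR, leadingCoeff_mul, leadingCoeff_C, hcomp0]
    field_simp
  refine ⟨hRm, hRdeg, ?_⟩
  -- basic geometry
  have hLne : L.Nonempty := by
    obtain ⟨S, hS, hcard⟩ := hLpts
    have hSne : S.Nonempty := Finset.card_pos.mp (by omega)
    obtain ⟨x, hx⟩ := hSne
    exact ⟨x, hS hx⟩
  have hdegpos : 0 < p.degree := natDegree_pos_iff_degree_pos.mp (by omega)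
  have hsurj : ∀ w : ℂ, ∃ z : ℂ, p.eval z = w := by
    intro w
    obtain ⟨z, hz⟩ := Complex.exists_root (f := p - C w)
      (by rw [degree_sub_C hdegpos]; exact hdegpos)
    exact ⟨z, by simpa [sub_eq_zero, IsRoot] using hz⟩
  have hKmem : ∀ z : ℂ, p.eval z ∈ L → z ∈ K := fun z hz => by rw [hK]; exact hz
  have hKne : K.Nonempty := by
    obtain ⟨x, hx⟩ := hLne
    obtain ⟨z, hz⟩ := hsurj x
    exact ⟨z, hKmem z (hz ▸ hx)⟩
  -- K compact
  have hKc : IsCompact K := by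
    have hKcl : IsClosed K := hK ▸ hL.isClosed.preimage p.continuous
    obtain ⟨B, hB⟩ := hL.isBounded.subset_closedBall 0
    have htt : Filter.Tendsto (fun x : ℂ => ‖eval x p‖) (Filter.cocompact ℂ) Filter.atTop :=
      p.tendsto_norm_atTop hdegpos tendsto_norm_cocompact_atTop
    have hev := htt.eventually_ge_atTop (B + 1)
    obtain ⟨t, htc, hts⟩ := Filter.mem_cocompact.mp hev
    refine htc.of_isClosed_subset hKcl fun z hz => ?_
    by_contra hzt
    have h1 : B + 1 ≤ ‖eval z p‖ := hts hzt
    have h2 : eval z p ∈ L := by rw [hK] at hz; exact hz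
    have h3 : ‖eval z p‖ ≤ B := by simpa using hB h2
    linarith
  -- norm identity for R
  set cn : ℝ := (‖a‖ ^ n)⁻¹ with hcn
  have hapos : 0 < ‖a‖ := norm_pos_iff.mpr ha0
  have hcn0 : 0 ≤ cn := by positivity
  have habsR : ∀ z : ℂ, wK z * ‖R.eval z‖
      = cn * (wL (p.eval z) * ‖T.eval (p.eval z)‖) := by
    intro z
    rw [hR, eval_mul, eval_C, eval_comp, norm_mul, norm_inv, norm_pow, hwK z]
    ring
  have himg : (fun z => wK z * ‖R.eval z‖) '' K
      = cn • ((fun w => wL w * ‖T.eval w‖) '' L) := by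
    ext y
    constructor
    · rintro ⟨z, hz, rfl⟩
      have hzL : p.eval z ∈ L := by rw [hK] at hz; exact hz
      refine ⟨wL (p.eval z) * ‖T.eval (p.eval z)‖,
        mem_image_of_mem _ hzL, ?_⟩
      show cn • _ = _
      rw [smul_eq_mul]
      exact (habsR z).symm
    · rintro ⟨x, ⟨w, hw, rfl⟩, rfl⟩
      obtain ⟨z, hz⟩ := hsurj w
      refine ⟨z, hKmem z (hz ▸ hw), ?_⟩
      show wK z * ‖R.eval z‖ = cn • (wL w * ‖T.eval w‖)
      rw [smul_eq_mul, habsR z, hz]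
  have hnormR : wnorm K wK R = cn * wnorm L wL T := by
    rw [wnorm, himg, Real.sSup_smul_of_nonneg hcn0, smul_eq_mul, wnorm]
  -- main inequality
  intro Q hQm hQd
  obtain ⟨P, hPd, hPl, hPe⟩ := fiber_avg hm hpdeg n Q hQm hQd
  have hm0C : (m : ℂ) ≠ 0 := Nat.cast_ne_zero.mpr (by omega)
  have hm0R : (m : ℝ) ≠ 0 := Nat.cast_ne_zero.mpr (by omega)
  have hP0 : P ≠ 0 := fun h => by
    rw [h, leadingCoeff_zero] at hPl
    field_simp at hPl
    exact hm0C (by simpa [hp0] using hPl.symm)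
  set P' : Polynomial ℂ := C ((m : ℂ)⁻¹ * a ^ n) * P with hP'
  have hP'm : P'.Monic := by
    rw [Monic.def, hP', leadingCoeff_mul, leadingCoeff_C, hPl]
    field_simp
    exact div_self (pow_ne_zero _ ha0)
  have hP'd : P'.natDegree = n := by
    rw [hP', natDegree_mul (by simp [ha0, hm0C]) hP0, natDegree_C, hPd]
    omega
  have hwKb : BddAbove (wK '' K) := by
    obtain ⟨Cv, hCv⟩ := hwb
    refine ⟨Cv, ?_⟩
    rintro y ⟨z, hz, rfl⟩
    have hzL : p.eval z ∈ L := by rw [hK] at hz; exact hz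
    rw [hwK z]
    exact hCv (mem_image_of_mem wL hzL)
  have hwK0 : ∀ z ∈ K, 0 ≤ wK z := fun z hz => by
    rw [hwK z]; exact hw0 _ (by rw [hK] at hz; exact hz)
  have hbddQ : BddAbove ((fun z => wK z * ‖Q.eval z‖) '' K) :=
    wnorm_bddAbove K hKc wK hwKb hwK0 Q
  have hMQ0 : 0 ≤ wnorm K wK Q := by
    obtain ⟨z, hz⟩ := hKne
    have h := le_csSup hbddQ (mem_image_of_mem (fun z => wK z * ‖Q.eval z‖) hz)
    exact le_trans (mul_nonneg (hwK0 z hz) (norm_nonneg (Q.eval z))) h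
  have hfiber_bound : ∀ w ∈ L, wL w * ‖P'.eval w‖
      ≤ ‖a‖ ^ n * wnorm K wK Q := by
    intro w hw
    have habsP : ‖P.eval w‖
        ≤ ((p - C w).roots.map fun z => ‖Q.eval z‖).sum := by
      rw [← hPe w]
      refine le_trans (norm_multiset_sum_le _) (le_of_eq ?_)
      rw [Multiset.map_map]
      congr 1
    have hsum : (((p - C w).roots.map fun z => wL w * ‖Q.eval z‖)).sum
        ≤ (m : ℝ) * wnorm K wK Q := by
      have := Multiset.sum_le_card_nsmul
        ((p - C w).roots.map fun z => wL w * ‖Q.eval z‖) (wnorm K wK Q) ?_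
      · rwa [Multiset.card_map, fiber_card hm hpdeg w, nsmul_eq_mul] at this
      · rintro x hx
        obtain ⟨z, hz, rfl⟩ := Multiset.mem_map.mp hx
        have hpz : p.eval z = w := by
          have := isRoot_of_mem_roots hz
          simpa [sub_eq_zero] using this
        have hzK : z ∈ K := hKmem z (hpz ▸ hw)
        have : wL w * ‖Q.eval z‖ = wK z * ‖Q.eval z‖ := by
          rw [hwK z, hpz]
        rw [this]
        exact le_csSup hbddQ (mem_image_of_mem _ hzK)
    have h1 : wL w * ‖P.eval w‖ ≤ (m : ℝ) * wnorm K wK Q := by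
      refine le_trans ?_ hsum
      rw [Multiset.sum_map_mul_left]
      exact mul_le_mul_of_nonneg_left habsP (hw0 w hw)
    have h2 : wL w * ‖P'.eval w‖
        = (m : ℝ)⁻¹ * ‖a‖ ^ n * (wL w * ‖P.eval w‖) := by
      rw [hP', eval_mul, eval_C, norm_mul, norm_mul, norm_inv, norm_pow, Complex.norm_natCast]
      ring
    rw [h2]
    calc (m : ℝ)⁻¹ * ‖a‖ ^ n * (wL w * ‖P.eval w‖)
        ≤ (m : ℝ)⁻¹ * ‖a‖ ^ n * ((m : ℝ) * wnorm K wK Q) := by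
          refine mul_le_mul_of_nonneg_left h1 (by positivity)
      _ = ‖a‖ ^ n * wnorm K wK Q := by field_simp
  have hnormP' : wnorm L wL P' ≤ ‖a‖ ^ n * wnorm K wK Q := by
    refine Real.sSup_le ?_ (mul_nonneg (by positivity) hMQ0)
    rintro x ⟨w, hw, rfl⟩
    exact hfiber_bound w hw
  calc wnorm K wK R = cn * wnorm L wL T := hnormR
    _ ≤ cn * wnorm L wL P' := mul_le_mul_of_nonneg_left (hTmin P' hP'm hP'd) hcn0
    _ ≤ cn * (‖a‖ ^ n * wnorm K wK Q) :=
        mul_le_mul_of_nonneg_left hnormP' hcn0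
    _ = wnorm K wK Q := by rw [hcn]; field_simp
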